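/- Let (X_1, Φ_1) be a connected matroid that is even representable but not almost odd representable, and let (X_2, Φ_2) be a connected matroid that is odd representable but not almost even representable, with X_1 and X_2 disjoint. Let (X, Φ) be their direct sum: X = X_1 ∪ X_2 and Φ(A) = Φ_1(A ∩ X_1) + Φ_2(A ∩ X_2) for all A ⊆ X. Suppose 0 < ε ≤ min(Φ_1(X_1), Φ_2(X_2)), and let Φ^ε be the ε-perturbation of Φ, i.e., Φ^ε(A) := min(Φ(A), Φ(X) − ε). Then Φ^ε is not cc-representable, i.e., Φ^ε does not lie in the closure of the convex cone generated by the set Υ[X] of representable rank functions on X. -/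

import Mathlib

open Module Filter Topology

/-- A representation of a rank function on ground set `X` by subspaces of a
finite-dimensional vector space `W` over a finite field `F`. -/
structure SubspaceRep {X : Type} (h : Finset X → ℝ) where
  F : Type
  W : Type
  [fieldF : Field F]
  [fintypeF : Fintype F]
  [addCommGroupW : AddCommGroup W]
  [moduleW : Module F W]
  [finiteDimensionalW : FiniteDimensional F W]
  V : X → Submodule F W
  rank_eq : ∀ A : Finset X, h A = (Module.finrank F ↥(A.sup V) : ℝ)

/-- `h` is representable: it is `q`-representable for some prime power `q`
(equivalently, it is given by subspace dimensions over some finite field). -/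
def IsRepresentable {X : Type} (h : Finset X → ℝ) : Prop := Nonempty (SubspaceRep h)

/-- `h` is even representable: `2^m`-representable for some positive integer `m`. -/
def EvenRepresentable {X : Type} (h : Finset X → ℝ) : Prop :=
  ∃ (r : SubspaceRep h) (m : ℕ), 0 < m ∧ Nat.card r.F = 2 ^ m

/-- `h` is odd representable: `p^m`-representable for some odd prime `p` and positive `m`. -/
def OddRepresentable {X : Type} (h : Finset X → ℝ) : Prop :=
  ∃ (r : SubspaceRep h) (p m : ℕ), p.Prime ∧ Odd p ∧ 0 < m ∧ Nat.card r.F = p ^ m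

/-- Polymatroid axioms: normalization, nonnegativity, monotonicity, submodularity. -/
def IsPolymatroid {X : Type} [DecidableEq X] (h : Finset X → ℝ) : Prop :=
  h ∅ = 0 ∧ (∀ A, 0 ≤ h A) ∧ (∀ A B : Finset X, A ⊆ B → h A ≤ h B) ∧
    ∀ A B : Finset X, h (A ∪ B) + h (A ∩ B) ≤ h A + h B

/-- The Ingleton expression `J_h(A1,A2,A3,A4)`. -/
noncomputable def ingletonJ {X : Type} [DecidableEq X] (h : Finset X → ℝ)
    (A1 A2 A3 A4 : Finset X) : ℝ :=
  h (A1 ∪ A2) + h (A1 ∪ A3) + h (A1 ∪ A4) + h (A2 ∪ A3) + h (A2 ∪ A4)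
    - h A1 - h A2 - h (A3 ∪ A4) - h (A1 ∪ A2 ∪ A3) - h (A1 ∪ A2 ∪ A4)

/-- `h` is Ingletonian if all Ingleton expressions are nonnegative. -/
def IsIngletonian {X : Type} [DecidableEq X] (h : Finset X → ℝ) : Prop :=
  ∀ A1 A2 A3 A4 : Finset X, 0 ≤ ingletonJ h A1 A2 A3 A4

/-- The convex cone generated by a set `S` of rank functions (viewed as points of
`ℝ^{2^|X|}`): all finite nonnegative combinations of elements of `S`. -/
def coneHull {X : Type} (S : Set (Finset X → ℝ)) : Set (Finset X → ℝ) :=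
  {x | ∃ (m : ℕ) (c : Fin m → ℝ) (f : Fin m → Finset X → ℝ),
    (∀ i, 0 ≤ c i) ∧ (∀ i, f i ∈ S) ∧ x = ∑ i, c i • f i}

/-- `h` is almost representable: a coordinatewise limit `h = lim_i c_i g_i` with
`c_i > 0` and each `g_i` representable. -/
def AlmostRepresentable {X : Type} (h : Finset X → ℝ) : Prop :=
  ∃ (g : ℕ → Finset X → ℝ) (c : ℕ → ℝ), (∀ i, IsRepresentable (g i)) ∧
    (∀ i, 0 < c i) ∧ ∀ A : Finset X, Tendsto (fun i => c i * g i A) atTop (𝓝 (h A))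

/-- `h` is almost even representable. -/
def AlmostEvenRepresentable {X : Type} (h : Finset X → ℝ) : Prop :=
  ∃ (g : ℕ → Finset X → ℝ) (c : ℕ → ℝ), (∀ i, EvenRepresentable (g i)) ∧
    (∀ i, 0 < c i) ∧ ∀ A : Finset X, Tendsto (fun i => c i * g i A) atTop (𝓝 (h A))

/-- `h` is almost odd representable. -/
def AlmostOddRepresentable {X : Type} (h : Finset X → ℝ) : Prop :=
  ∃ (g : ℕ → Finset X → ℝ) (c : ℕ → ℝ), (∀ i, OddRepresentable (g i)) ∧
    (∀ i, 0 < c i) ∧ ∀ A : Finset X, Tendsto (fun i => c i * g i A) atTop (𝓝 (h A))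

/-- `h` is cc-representable: it lies in the closure of the convex cone generated by
the set `Υ[X]` of representable rank functions on `X`. -/
def CcRepresentable {X : Type} (h : Finset X → ℝ) : Prop :=
  h ∈ closure (coneHull {g : Finset X → ℝ | IsRepresentable g})

/-- A matroid: an integer-valued polymatroid with `h(A) ≤ |A|`. -/
def IsIntMatroid {X : Type} [DecidableEq X] (h : Finset X → ℝ) : Prop :=
  IsPolymatroid h ∧ (∀ A : Finset X, ∃ z : ℤ, h A = (z : ℝ)) ∧ ∀ A : Finset X, h A ≤ A.card

/-- A circuit of a matroid: a minimal dependent set. -/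
def IsCircuit {X : Type} (h : Finset X → ℝ) (C : Finset X) : Prop :=
  h C < C.card ∧ ∀ D : Finset X, D ⊂ C → h D = D.card

/-- A connected matroid: every pair of distinct elements lies in a common circuit. -/
def IsConnectedMatroid {X : Type} [DecidableEq X] (h : Finset X → ℝ) : Prop :=
  IsIntMatroid h ∧ ∀ x y : X, x ≠ y → ∃ C : Finset X, IsCircuit h C ∧ x ∈ C ∧ y ∈ C

variable {Y : Type} [DecidableEq Y]

lemma isPolymatroid_zero : IsPolymatroid (0 : Finset Y → ℝ) := by
  refine ⟨rfl, fun A => le_rfl, fun A B _ => le_rfl, fun A B => by simp⟩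

lemma IsPolymatroid.smul_nonneg {h : Finset Y → ℝ} {c : ℝ} (hc : 0 ≤ c)
    (hh : IsPolymatroid h) : IsPolymatroid (c • h) := by
  obtain ⟨h0, hnn, hmono, hsub⟩ := hh
  refine ⟨by simp [h0], fun A => by simpa using mul_nonneg hc (hnn A),
    fun A B hAB => by simpa using mul_le_mul_of_nonneg_left (hmono A B hAB) hc,
    fun A B => ?_⟩
  simp only [Pi.smul_apply, smul_eq_mul]
  nlinarith [hsub A B, hnn (A ∪ B), hnn (A ∩ B)]

lemma IsPolymatroid.add {h g : Finset Y → ℝ} (hh : IsPolymatroid h) (hg : IsPolymatroid g) :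
    IsPolymatroid (h + g) := by
  obtain ⟨h0, hnn, hmono, hsub⟩ := hh
  obtain ⟨g0, gnn, gmono, gsub⟩ := hg
  refine ⟨by simp [h0, g0], fun A => by simpa using add_nonneg (hnn A) (gnn A),
    fun A B hAB => by simpa using add_le_add (hmono A B hAB) (gmono A B hAB),
    fun A B => ?_⟩
  simp only [Pi.add_apply]
  linarith [hsub A B, gsub A B]

lemma isPolymatroid_sum {ι : Type*} (t : Finset ι) (f : ι → Finset Y → ℝ)
    (hf : ∀ i ∈ t, IsPolymatroid (f i)) : IsPolymatroid (∑ i ∈ t, f i) := by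
  classical
  induction t using Finset.induction with
  | empty => simpa using isPolymatroid_zero
  | insert _ _ hx ih =>
    rw [Finset.sum_insert hx]
    exact (hf _ (Finset.mem_insert_self _ _)).add
      (ih fun i hi => hf i (Finset.mem_insert_of_mem hi))

lemma isPolymatroid_of_tendsto {f : ℕ → Finset Y → ℝ} {g : Finset Y → ℝ}
    (hf : ∀ k, IsPolymatroid (f k))
    (hg : ∀ A, Tendsto (fun k => f k A) atTop (𝓝 (g A))) : IsPolymatroid g := by
  refine ⟨?_, fun A => ?_, fun A B hAB => ?_, fun A B => ?_⟩
  · have h1 : Tendsto (fun k => f k (∅ : Finset Y)) atTop (𝓝 0) := by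
      simpa using tendsto_const_nhds.congr (fun k => ((hf k).1).symm)
    exact tendsto_nhds_unique (hg ∅) h1
  · exact le_of_tendsto_of_tendsto' tendsto_const_nhds (hg A) (fun k => (hf k).2.1 A)
  · exact le_of_tendsto_of_tendsto' (hg A) (hg B) (fun k => (hf k).2.2.1 A B hAB)
  · exact le_of_tendsto_of_tendsto' ((hg (A ∪ B)).add (hg (A ∩ B)))
      ((hg A).add (hg B)) (fun k => (hf k).2.2.2 A B)

lemma coneHull_polymatroid {Y : Type} [DecidableEq Y] {S : Set (Finset Y → ℝ)}
    (hS : ∀ g ∈ S, IsPolymatroid g) {x : Finset Y → ℝ} (hx : x ∈ coneHull S) :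
    IsPolymatroid x := by
  obtain ⟨m, c, f, hc, hf, rfl⟩ := hx
  exact isPolymatroid_sum _ _ fun i _ => ((hS _ (hf i)).smul_nonneg (hc i))

lemma IsRepresentable.isPolymatroid {X : Type} [DecidableEq X] {h : Finset X → ℝ}
    (hr : IsRepresentable h) : IsPolymatroid h := by
  obtain ⟨r⟩ := hr
  letI := r.fieldF; letI := r.fintypeF; letI := r.addCommGroupW
  letI := r.moduleW; letI := r.finiteDimensionalW
  refine ⟨?_, fun A => ?_, fun A B hAB => ?_, fun A B => ?_⟩
  · rw [r.rank_eq ∅, Finset.sup_empty]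
    simp
  · rw [r.rank_eq]; positivity
  · rw [r.rank_eq, r.rank_eq]
    exact_mod_cast Submodule.finrank_mono (Finset.sup_mono hAB)
  · rw [r.rank_eq, r.rank_eq, r.rank_eq, r.rank_eq]
    have h1 : (A ∪ B).sup r.V = A.sup r.V ⊔ B.sup r.V := Finset.sup_union
    have h2 : (A ∩ B).sup r.V ≤ A.sup r.V ⊓ B.sup r.V :=
      le_inf (Finset.sup_mono Finset.inter_subset_left)
        (Finset.sup_mono Finset.inter_subset_right)
    have h3 : finrank r.F ↥((A ∩ B).sup r.V) ≤ finrank r.F ↥(A.sup r.V ⊓ B.sup r.V) :=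
      Submodule.finrank_mono h2
    have key := Submodule.finrank_sup_add_finrank_inf_eq (A.sup r.V) (B.sup r.V)
    rw [h1]
    have : (finrank r.F ↥(A.sup r.V ⊔ B.sup r.V) : ℝ) + finrank r.F ↥(A.sup r.V ⊓ B.sup r.V)
        = finrank r.F ↥(A.sup r.V) + finrank r.F ↥(B.sup r.V) := by exact_mod_cast key
    have h3' : (finrank r.F ↥((A ∩ B).sup r.V) : ℝ) ≤ finrank r.F ↥(A.sup r.V ⊓ B.sup r.V) := by
      exact_mod_cast h3
    linarith

lemma EvenRepresentable.isRepresentable {X : Type} {h : Finset X → ℝ}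
    (hr : EvenRepresentable h) : IsRepresentable h := ⟨hr.choose⟩

lemma OddRepresentable.isRepresentable {X : Type} {h : Finset X → ℝ}
    (hr : OddRepresentable h) : IsRepresentable h := ⟨hr.choose⟩

/-- the zero function is representable over any `ZMod p`. -/
def zeroRep (X : Type) (p : ℕ) [Fact p.Prime] : SubspaceRep (0 : Finset X → ℝ) where
  F := ZMod p
  W := ZMod p
  V := fun _ => ⊥
  rank_eq := by
    intro A
    have hsup : A.sup (fun _ => (⊥ : Submodule (ZMod p) (ZMod p))) = ⊥ :=
      le_bot_iff.mp (Finset.sup_le fun _ _ => le_rfl)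
    rw [hsup]
    simp

lemma evenRepresentable_zero (X : Type) : EvenRepresentable (0 : Finset X → ℝ) := by
  haveI : Fact (Nat.Prime 2) := ⟨Nat.prime_two⟩
  exact ⟨zeroRep X 2, 1, one_pos, by simp [zeroRep, Nat.card_zmod]⟩

lemma oddRepresentable_zero (X : Type) : OddRepresentable (0 : Finset X → ℝ) := by
  haveI : Fact (Nat.Prime 3) := ⟨Nat.prime_three⟩
  exact ⟨zeroRep X 3, 3, 1, Nat.prime_three, ⟨1, by norm_num⟩, one_pos, by simp [zeroRep, Nat.card_zmod]⟩

lemma IsRepresentable.even_or_odd {X : Type} {h : Finset X → ℝ} (hr : IsRepresentable h) :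
    EvenRepresentable h ∨ OddRepresentable h := by
  obtain ⟨r⟩ := hr
  letI := r.fieldF; letI := r.fintypeF
  obtain ⟨p, -, n, hp, hcard⟩ := FiniteField.card' r.F
  have hnat : Nat.card r.F = p ^ (n : ℕ) := by
    rw [Nat.card_eq_fintype_card, hcard]
  rcases hp.eq_two_or_odd' with h2 | hodd
  · exact Or.inl ⟨r, n, n.pos, by rw [hnat, h2]⟩
  · exact Or.inr ⟨r, p, n, hp, hodd, n.pos, hnat⟩

section Restriction
variable {X1 X2 : Type}

/-- restriction of a rank function to the left summand. -/
def resL (h : Finset (X1 ⊕ X2) → ℝ) : Finset X1 → ℝ :=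
  fun A => h (A.map (Function.Embedding.inl))

def resR (h : Finset (X1 ⊕ X2) → ℝ) : Finset X2 → ℝ :=
  fun A => h (A.map (Function.Embedding.inr))

variable [DecidableEq X1] [DecidableEq X2]

lemma IsPolymatroid.resL {h : Finset (X1 ⊕ X2) → ℝ} (hh : IsPolymatroid h) :
    IsPolymatroid (resL h) := by
  obtain ⟨h0, hnn, hmono, hsub⟩ := hh
  refine ⟨by simpa [_root_.resL] using h0, fun A => hnn _,
    fun A B hAB => hmono _ _ (Finset.map_subset_map.2 hAB), fun A B => ?_⟩
  have := hsub (A.map .inl) (B.map .inl)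
  rwa [← Finset.map_union, ← Finset.map_inter] at this

lemma IsPolymatroid.resR {h : Finset (X1 ⊕ X2) → ℝ} (hh : IsPolymatroid h) :
    IsPolymatroid (resR h) := by
  obtain ⟨h0, hnn, hmono, hsub⟩ := hh
  refine ⟨by simpa [_root_.resR] using h0, fun A => hnn _,
    fun A B hAB => hmono _ _ (Finset.map_subset_map.2 hAB), fun A B => ?_⟩
  have := hsub (A.map .inr) (B.map .inr)
  rwa [← Finset.map_union, ← Finset.map_inter] at this

def SubspaceRep.restrictL {h : Finset (X1 ⊕ X2) → ℝ} (r : SubspaceRep h) :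
    SubspaceRep (resL h) where
  F := r.F
  W := r.W
  fieldF := r.fieldF
  fintypeF := r.fintypeF
  addCommGroupW := r.addCommGroupW
  moduleW := r.moduleW
  finiteDimensionalW := r.finiteDimensionalW
  V := fun x => r.V (Sum.inl x)
  rank_eq := by
    intro A
    have := r.rank_eq (A.map .inl)
    rwa [Finset.sup_map] at this

def SubspaceRep.restrictR {h : Finset (X1 ⊕ X2) → ℝ} (r : SubspaceRep h) :
    SubspaceRep (resR h) where
  F := r.F
  W := r.W
  fieldF := r.fieldF
  fintypeF := r.fintypeF
  addCommGroupW := r.addCommGroupW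
  moduleW := r.moduleW
  finiteDimensionalW := r.finiteDimensionalW
  V := fun x => r.V (Sum.inr x)
  rank_eq := by
    intro A
    have := r.rank_eq (A.map .inr)
    rwa [Finset.sup_map] at this

lemma EvenRepresentable.resL {h : Finset (X1 ⊕ X2) → ℝ} (hr : EvenRepresentable h) :
    EvenRepresentable (_root_.resL h) := by
  obtain ⟨r, m, hm, hc⟩ := hr
  exact ⟨r.restrictL, m, hm, hc⟩

lemma OddRepresentable.resL {h : Finset (X1 ⊕ X2) → ℝ} (hr : OddRepresentable h) :
    OddRepresentable (_root_.resL h) := by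
  obtain ⟨r, p, m, h1, h2, h3, h4⟩ := hr
  exact ⟨r.restrictL, p, m, h1, h2, h3, h4⟩

lemma EvenRepresentable.resR {h : Finset (X1 ⊕ X2) → ℝ} (hr : EvenRepresentable h) :
    EvenRepresentable (_root_.resR h) := by
  obtain ⟨r, m, hm, hc⟩ := hr
  exact ⟨r.restrictR, m, hm, hc⟩

lemma OddRepresentable.resR {h : Finset (X1 ⊕ X2) → ℝ} (hr : OddRepresentable h) :
    OddRepresentable (_root_.resR h) := by
  obtain ⟨r, p, m, h1, h2, h3, h4⟩ := hr
  exact ⟨r.restrictR, p, m, h1, h2, h3, h4⟩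

@[simp] lemma toLeft_map_inl (A : Finset X1) :
    (A.map (Function.Embedding.inl : X1 ↪ X1 ⊕ X2)).toLeft = A := by
  ext x; simp

@[simp] lemma toRight_map_inl (A : Finset X1) :
    (A.map (Function.Embedding.inl : X1 ↪ X1 ⊕ X2)).toRight = ∅ := by
  ext x; simp

@[simp] lemma toLeft_map_inr (A : Finset X2) :
    (A.map (Function.Embedding.inr : X2 ↪ X1 ⊕ X2)).toLeft = ∅ := by
  ext x; simp

@[simp] lemma toRight_map_inr (A : Finset X2) :
    (A.map (Function.Embedding.inr : X2 ↪ X1 ⊕ X2)).toRight = A := by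
  ext x; simp

variable [Fintype X1] [Fintype X2]

@[simp] lemma toLeft_univ : (Finset.univ : Finset (X1 ⊕ X2)).toLeft = Finset.univ := by
  ext x; simp

@[simp] lemma toRight_univ : (Finset.univ : Finset (X1 ⊕ X2)).toRight = Finset.univ := by
  ext x; simp

lemma map_inl_union_map_inr :
    (Finset.univ.map (Function.Embedding.inl : X1 ↪ X1 ⊕ X2)) ∪
      (Finset.univ.map (Function.Embedding.inr : X2 ↪ X1 ⊕ X2)) = Finset.univ := by
  ext x; cases x <;> simp

lemma map_inl_inter_map_inr :
    (Finset.univ.map (Function.Embedding.inl : X1 ↪ X1 ⊕ X2)) ∩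
      (Finset.univ.map (Function.Embedding.inr : X2 ↪ X1 ⊕ X2)) = ∅ := by
  ext x; cases x <;> simp

end Restriction

section Extreme
variable {Y : Type} [Fintype Y] [DecidableEq Y]

lemma poly_le_add_sum {h : Finset Y → ℝ} (hp : IsPolymatroid h) :
    ∀ (B A : Finset Y), A ⊆ B → h B ≤ h A + ∑ x ∈ B \ A, h {x} := by
  obtain ⟨h0, hnn, hmono, hsub⟩ := hp
  suffices H : ∀ (n : ℕ) (B A : Finset Y), A ⊆ B → (B \ A).card = n →
      h B ≤ h A + ∑ x ∈ B \ A, h {x} by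
    exact fun B A hAB => H _ B A hAB rfl
  intro n
  induction n with
  | zero =>
    intro B A hAB hcard
    have : B \ A = ∅ := Finset.card_eq_zero.mp hcard
    have hBA : B = A := Finset.Subset.antisymm
      (fun x hx => by
        by_contra hxA
        exact absurd (Finset.mem_sdiff.mpr ⟨hx, hxA⟩) (by simp [this])) hAB
    simp [hBA, this]
  | succ n ih =>
    intro B A hAB hcard
    have hne : (B \ A).Nonempty := Finset.card_pos.mp (by omega)
    obtain ⟨x, hx⟩ := hne
    obtain ⟨hxB, hxA⟩ := Finset.mem_sdiff.mp hx
    set B' := B.erase x with hB'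
    have hAB' : A ⊆ B' := fun y hy =>
      Finset.mem_erase.mpr ⟨fun hyx => hxA (hyx ▸ hy), hAB hy⟩
    have hsd : B' \ A = (B \ A).erase x := by
      ext y; simp [hB', Finset.mem_erase, Finset.mem_sdiff]; tauto
    have hcard' : (B' \ A).card = n := by
      rw [hsd, Finset.card_erase_of_mem hx, hcard]
      omega
    have step : h B ≤ h B' + h {x} := by
      have hU : B' ∪ {x} = B := by
        rw [Finset.union_comm, ← Finset.insert_eq, Finset.insert_erase hxB]
      have := hsub B' {x}
      rw [hU] at this
      have := le_trans (le_add_of_nonneg_right (hnn (B' ∩ {x}))) this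
      linarith
    have := ih B' A hAB' hcard'
    have hsumeq : ∑ y ∈ B' \ A, h {y} + h {x} = ∑ y ∈ B \ A, h {y} := by
      rw [hsd]; exact Finset.sum_erase_add _ _ hx
    linarith

lemma extreme_decomp {r g g' : Finset Y → ℝ}
    (hconn : IsConnectedMatroid r) (hru : 0 < r Finset.univ)
    (hg : IsPolymatroid g) (hg' : IsPolymatroid g')
    (hsum : ∀ A, g A + g' A = r A) :
    ∃ a, 0 ≤ a ∧ ∀ A, g A = a * r A := by
  obtain ⟨⟨hrpoly, hrint, hrcard⟩, hcirc⟩ := hconn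
  obtain ⟨hr0, hrnn, hrmono, hrsub⟩ := hrpoly
  obtain ⟨hg0, hgnn, hgmono, hgsub⟩ := hg
  obtain ⟨hg'0, hg'nn, hg'mono, hg'sub⟩ := hg'
  -- integer gap
  have hgap : ∀ C : Finset Y, r C < C.card → r C ≤ (C.card : ℝ) - 1 := by
    intro C hC
    obtain ⟨z, hz⟩ := hrint C
    rw [hz] at hC ⊢
    have h1 : z < (C.card : ℤ) := by exact_mod_cast hC
    have h2 : z ≤ (C.card : ℤ) - 1 := by omega
    have : (z : ℝ) ≤ ((C.card : ℤ) : ℝ) - 1 := by exact_mod_cast h2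
    simpa using this
  -- there is an element of positive rank
  have hy0 : ∃ y : Y, 0 < r {y} := by
    by_contra hcon
    push_neg at hcon
    have h1 := poly_le_add_sum ⟨hr0, hrnn, hrmono, hrsub⟩ Finset.univ ∅ (Finset.empty_subset _)
    rw [hr0, Finset.sdiff_empty] at h1
    have h2 : ∑ x ∈ Finset.univ, r {x} ≤ 0 :=
      Finset.sum_nonpos fun x _ => hcon x
    linarith
  obtain ⟨y0, hy0⟩ := hy0
  -- every singleton has rank 1
  have hone : ∀ x : Y, r {x} = 1 := by
    intro x
    rcases eq_or_ne x y0 with rfl | hne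
    · obtain ⟨z, hz⟩ := hrint {x}
      have hle := hrcard {x}
      rw [hz] at hy0 hle ⊢
      simp only [Finset.card_singleton] at hle
      have h1 : 0 < z := by exact_mod_cast hy0
      have h2 : z ≤ 1 := by exact_mod_cast hle
      have : z = 1 := by omega
      rw [this]; norm_num
    · obtain ⟨C, hC, hxC, hy0C⟩ := hcirc x y0 hne
      have hss : {x} ⊂ C := by
        rw [Finset.ssubset_iff_subset_ne]
        refine ⟨Finset.singleton_subset_iff.mpr hxC, fun h => hne ?_⟩
        have := h ▸ hy0C
        exact (Finset.mem_singleton.mp this).symm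
      have := hC.2 {x} hss
      simpa using this
  -- subsets of independent sets are independent
  have hindep : ∀ E D : Finset Y, D ⊆ E → r E = E.card → r D = D.card := by
    intro E D hDE hE
    have h1 := poly_le_add_sum ⟨hr0, hrnn, hrmono, hrsub⟩ E D hDE
    have h2 : ∑ x ∈ E \ D, r {x} = ((E \ D).card : ℝ) := by
      rw [Finset.sum_congr rfl fun x _ => hone x]
      simp
    have h3 : (E \ D).card = E.card - D.card := Finset.card_sdiff_of_subset hDE
    have h4 : D.card ≤ E.card := Finset.card_le_card hDE
    have h5 : ((E \ D).card : ℝ) = (E.card : ℝ) - D.card := by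
      rw [h3, Nat.cast_sub h4]
    have h6 := hrcard D
    rw [hE, h2, h5] at h1
    linarith
  -- modularity of g on independent sets
  have hmod : ∀ D : Finset Y, r D = D.card → g D = ∑ x ∈ D, g {x} := by
    intro D
    induction D using Finset.strongInduction with
    | _ D ih =>
      intro hD
      rcases D.eq_empty_or_nonempty with rfl | ⟨x, hx⟩
      · simp [hg0]
      · set D' := D.erase x with hD'
        have hssD : D' ⊂ D := Finset.erase_ssubset hx
        have hrD' : r D' = D'.card := hindep D D' (Finset.erase_subset _ _) hD
        have hcardD : D.card = D'.card + 1 := (Finset.card_erase_add_one hx).symm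
        have hUD : D' ∪ {x} = D := by
          rw [Finset.union_comm, ← Finset.insert_eq, Finset.insert_erase hx]
        have hID : D' ∩ {x} = ∅ := by
          ext y; simp [hD', Finset.mem_erase]
        have hgstep : g D ≤ g D' + g {x} := by
          have := hgsub D' {x}
          rw [hUD, hID, hg0] at this; linarith
        have hg'step : g' D ≤ g' D' + g' {x} := by
          have := hg'sub D' {x}
          rw [hUD, hID, hg'0] at this; linarith
        have hr_eq : r D = r D' + r {x} := by
          rw [hD, hrD', hone x, hcardD]
          push_cast
          ring
        have hgeq : g D = g D' + g {x} := by
          have e1 := hsum D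
          have e2 := hsum D'
          have e3 := hsum {x}
          linarith
        rw [hgeq, ih D' hssD hrD']
        exact (Finset.sum_erase_add D _ hx)
  -- circuits: rank and g drop nothing when removing a point
  have hstep5 : ∀ C : Finset Y, IsCircuit r C → ∀ x ∈ C,
      r C = r (C.erase x) ∧ g C = g (C.erase x) := by
    intro C hC x hx
    have hssC : C.erase x ⊂ C := Finset.erase_ssubset hx
    have hrCe : r (C.erase x) = (C.erase x).card := hC.2 _ hssC
    have hcarde : ((C.erase x).card : ℝ) = (C.card : ℝ) - 1 := by
      have h1c : 1 ≤ C.card := Finset.card_pos.mpr ⟨x, hx⟩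
      rw [Finset.card_erase_of_mem hx, Nat.cast_sub h1c]
      norm_num
    have h1 : r C ≤ (C.card : ℝ) - 1 := hgap C hC.1
    have h2 : r (C.erase x) ≤ r C := hrmono _ _ (Finset.erase_subset _ _)
    have h2' : (C.card : ℝ) - 1 ≤ r C := by rw [← hcarde, ← hrCe]; exact h2
    have hreq : r C = r (C.erase x) := by rw [hrCe, hcarde]; linarith
    have hgle : g (C.erase x) ≤ g C := hgmono _ _ (Finset.erase_subset _ _)
    have hg'le : g' (C.erase x) ≤ g' C := hg'mono _ _ (Finset.erase_subset _ _)
    have e1 := hsum C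
    have e2 := hsum (C.erase x)
    exact ⟨hreq, by linarith⟩
  -- singleton values are constant
  have hconst : ∀ x : Y, g {x} = g {y0} := by
    intro x
    rcases eq_or_ne x y0 with rfl | hne
    · rfl
    · obtain ⟨C, hC, hxC, hy0C⟩ := hcirc x y0 hne
      have hx := (hstep5 C hC x hxC).2
      have hy := (hstep5 C hC y0 hy0C).2
      have hmx : g (C.erase x) = ∑ y ∈ C.erase x, g {y} :=
        hmod _ (hC.2 _ (Finset.erase_ssubset hxC))
      have hmy : g (C.erase y0) = ∑ y ∈ C.erase y0, g {y} :=
        hmod _ (hC.2 _ (Finset.erase_ssubset hy0C))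
      have ex : ∑ y ∈ C.erase x, g {y} + g {x} = ∑ y ∈ C, g {y} :=
        Finset.sum_erase_add _ _ hxC
      have ey : ∑ y ∈ C.erase y0, g {y} + g {y0} = ∑ y ∈ C, g {y} :=
        Finset.sum_erase_add _ _ hy0C
      linarith [hx ▸ hmx, hy ▸ hmy]
  -- circuits in dependent sets
  have hfind : ∀ A : Finset Y, r A < A.card → ∃ C, C ⊆ A ∧ IsCircuit r C := by
    intro A
    induction A using Finset.strongInduction with
    | _ A ih =>
      intro hA
      by_cases hall : ∀ D, D ⊂ A → r D = D.card
      · exact ⟨A, Finset.Subset.refl A, hA, hall⟩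
      · push_neg at hall
        obtain ⟨D, hDA, hD⟩ := hall
        have hDlt : r D < D.card := lt_of_le_of_ne (hrcard D) hD
        obtain ⟨C, hCD, hC⟩ := ih D hDA hDlt
        exact ⟨C, hCD.trans hDA.subset, hC⟩
  -- main induction
  refine ⟨g {y0}, hgnn {y0}, ?_⟩
  intro A
  induction A using Finset.strongInduction with
  | _ A ih =>
    by_cases hA : r A = A.card
    · rw [hmod A hA, Finset.sum_congr rfl fun x _ => hconst x]
      rw [Finset.sum_const, hA]
      simp [mul_comm]
    · have hAlt : r A < A.card := lt_of_le_of_ne (hrcard A) hA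
      obtain ⟨C, hCA, hC⟩ := hfind A hAlt
      have hCne : C.Nonempty := by
        rcases C.eq_empty_or_nonempty with rfl | h
        · exfalso
          have := hC.1
          simp [hr0] at this
        · exact h
      obtain ⟨x, hxC⟩ := hCne
      have hxA : x ∈ A := hCA hxC
      have hU : (A.erase x) ∪ C = A := by
        ext y
        simp only [Finset.mem_union, Finset.mem_erase]
        constructor
        · rintro (⟨-, hy⟩ | hy)
          · exact hy
          · exact hCA hy
        · intro hy
          by_cases hyx : y = x
          · exact Or.inr (hyx ▸ hxC)
          · exact Or.inl ⟨hyx, hy⟩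
      have hI : (A.erase x) ∩ C = C.erase x := by
        ext y
        simp only [Finset.mem_inter, Finset.mem_erase]
        constructor
        · rintro ⟨⟨hyx, -⟩, hy⟩
          exact ⟨hyx, hy⟩
        · rintro ⟨hyx, hy⟩
          exact ⟨⟨hyx, hCA hy⟩, hy⟩
      obtain ⟨hr5, hg5⟩ := hstep5 C hC x hxC
      have hrA : r A = r (A.erase x) := by
        have := hrsub (A.erase x) C
        rw [hU, hI] at this
        have hmono' := hrmono _ _ (Finset.erase_subset x A)
        linarith
      have hgA : g A = g (A.erase x) := by
        have := hgsub (A.erase x) C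
        rw [hU, hI] at this
        have hmono' := hgmono _ _ (Finset.erase_subset x A)
        linarith
      rw [hgA, ih (A.erase x) (Finset.erase_ssubset hxA), ← hrA]

end Extreme

lemma mem_convexHull_finN {E : Type} [AddCommGroup E] [Module ℝ E] [FiniteDimensional ℝ E]
    {s : Set E} (hne : s.Nonempty) {x : E} (hx : x ∈ convexHull ℝ s) :
    ∃ (w : Fin (Module.finrank ℝ E + 1) → ℝ) (z : Fin (Module.finrank ℝ E + 1) → E),
      (∀ i, 0 ≤ w i) ∧ (∑ i, w i = 1) ∧ (∀ i, z i ∈ s) ∧ x = ∑ i, w i • z i := by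
  classical
  obtain ⟨ι, hfin, z0, w0, hrange, haff, hpos, hsum1, hsumx⟩ :=
    eq_pos_convex_span_of_mem_convexHull hx
  have hcard : Fintype.card ι ≤ Module.finrank ℝ E + 1 := by
    have h1 := haff.card_le_finrank_succ
    have h2 : Module.finrank ℝ ↥(vectorSpan ℝ (Set.range z0)) ≤ Module.finrank ℝ E :=
      Submodule.finrank_le _
    omega
  obtain ⟨e⟩ : Nonempty (ι ↪ Fin (Module.finrank ℝ E + 1)) :=
    Function.Embedding.nonempty_of_card_le (by simpa using hcard)
  obtain ⟨u0, hu0⟩ := hne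
  set w : Fin (Module.finrank ℝ E + 1) → ℝ := Function.extend e w0 0 with hw
  set z : Fin (Module.finrank ℝ E + 1) → E := Function.extend e z0 (fun _ => u0) with hz
  have hwi : ∀ i, w (e i) = w0 i := fun i => e.injective.extend_apply w0 0 i
  have hzi : ∀ i, z (e i) = z0 i := fun i => e.injective.extend_apply z0 _ i
  have himg : ∀ j, j ∉ Finset.univ.image e → ¬∃ i, e i = j := by
    rintro j hj ⟨i, hi⟩
    exact hj (Finset.mem_image.mpr ⟨i, Finset.mem_univ _, hi⟩)
  have hwj : ∀ j, j ∉ Finset.univ.image e → w j = 0 := by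
    intro j hj
    rw [hw, Function.extend_apply' _ _ _ (himg j hj)]
    rfl
  have hzj : ∀ j, j ∉ Finset.univ.image e → z j = u0 := by
    intro j hj
    rw [hz, Function.extend_apply' _ _ _ (himg j hj)]
  refine ⟨w, z, ?_, ?_, ?_, ?_⟩
  · intro j
    by_cases hj : j ∈ Finset.univ.image e
    · obtain ⟨i, -, rfl⟩ := Finset.mem_image.mp hj
      rw [hwi]
      exact (hpos i).le
    · rw [hwj j hj]
  · calc ∑ j, w j = ∑ j ∈ Finset.univ.image e, w j :=
          (Finset.sum_subset (Finset.subset_univ _) (fun j _ hj => hwj j hj)).symm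
      _ = ∑ i, w (e i) := Finset.sum_image (fun a _ b _ hab => e.injective hab)
      _ = 1 := by rw [Finset.sum_congr rfl fun i _ => hwi i]; exact hsum1
  · intro j
    by_cases hj : j ∈ Finset.univ.image e
    · obtain ⟨i, -, rfl⟩ := Finset.mem_image.mp hj
      rw [hzi]
      exact hrange (Set.mem_range_self _)
    · rw [hzj j hj]; exact hu0
  · rw [← hsumx]
    calc ∑ i, w0 i • z0 i
        = ∑ i, w (e i) • z (e i) := by
          refine Finset.sum_congr rfl fun i _ => ?_
          rw [hwi, hzi]
      _ = ∑ j ∈ Finset.univ.image e, w j • z j :=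
          (Finset.sum_image (f := fun j => w j • z j)
            (fun a _ b _ hab => e.injective hab)).symm
      _ = ∑ j, w j • z j :=
          Finset.sum_subset (Finset.subset_univ _)
            (fun j _ hj => by rw [hwj j hj, zero_smul])

section Extract
variable {Y : Type} [Fintype Y] [DecidableEq Y]

lemma smul_coneHull {S : Set (Finset Y → ℝ)} {x : Finset Y → ℝ} {c : ℝ} (hc : 0 ≤ c)
    (hx : x ∈ coneHull S) : c • x ∈ coneHull S := by
  obtain ⟨m, co, f, hco, hf, rfl⟩ := hx
  exact ⟨m, fun i => c * co i, f, fun i => mul_nonneg hc (hco i), hf, by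
    rw [Finset.smul_sum]
    exact Finset.sum_congr rfl fun i _ => (smul_smul c (co i) (f i))⟩

/-- Main extraction lemma: if a connected matroid of positive rank lies in the closure of
the cone generated by a set `S` of polymatroids, then it is a limit of single scaled
elements of `S`. -/
lemma extract_single {r : Finset Y → ℝ}
    (hconn : IsConnectedMatroid r) (hru : 0 < r Finset.univ)
    {S : Set (Finset Y → ℝ)} (hS : ∀ g ∈ S, IsPolymatroid g)
    (hmem : r ∈ closure (coneHull S)) :
    ∃ (g : ℕ → Finset Y → ℝ) (c : ℕ → ℝ), (∀ i, g i ∈ S) ∧ (∀ i, 0 < c i) ∧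
      ∀ A : Finset Y, Tendsto (fun i => c i * g i A) atTop (𝓝 (r A)) := by
  classical
  set R := r Finset.univ with hR
  -- the scaled single-element set and its normalized part
  set T : Set (Finset Y → ℝ) := {t | ∃ (c : ℝ) (g : Finset Y → ℝ), 0 < c ∧ g ∈ S ∧ t = c • g} with hT
  set U : Set (Finset Y → ℝ) := {t | IsPolymatroid t ∧ t Finset.univ = 1 ∧ t ∈ T} with hU
  have hTpoly : ∀ t ∈ T, IsPolymatroid t := by
    rintro t ⟨c, g, hc, hgS, rfl⟩
    exact (hS g hgS).smul_nonneg hc.le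
  -- approximating sequence from the closure
  obtain ⟨h, hhmem, hhtend⟩ := mem_closure_iff_seq_limit.mp hmem
  have hco : ∀ A, Tendsto (fun k => h k A) atTop (𝓝 (r A)) := tendsto_pi_nhds.mp hhtend
  have hHpoly : ∀ k, IsPolymatroid (h k) := fun k => coneHull_polymatroid hS (hhmem k)
  have hsk : Tendsto (fun k => h k Finset.univ) atTop (𝓝 R) := hco Finset.univ
  obtain ⟨K0, hK0⟩ := eventually_atTop.mp (hsk.eventually (lt_mem_nhds hru))
  -- normalized cone elements lie in the convex hull of U
  have hhull : ∀ k, 0 < h k Finset.univ → (h k Finset.univ)⁻¹ • h k ∈ convexHull ℝ U := by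
    intro k hk
    obtain ⟨m, c, f, hc, hf, heq⟩ := hhmem k
    set t : Fin m → ℝ := fun i => c i * f i Finset.univ with ht
    have htnn : ∀ i, 0 ≤ t i := fun i => mul_nonneg (hc i) ((hS _ (hf i)).2.1 _)
    have hsum_t : ∑ i, t i = h k Finset.univ := by
      rw [heq]; simp [ht, Finset.sum_apply]
    have hzero : ∀ i : Fin m, t i = 0 → c i • f i = 0 := by
      intro i hti
      rcases mul_eq_zero.mp hti with hci | hfi
      · rw [hci, zero_smul]
      · have hfz : f i = 0 := by
          funext A
          have h1 : f i A ≤ f i Finset.univ :=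
            (hS _ (hf i)).2.2.1 A Finset.univ (Finset.subset_univ A)
          have h2 : 0 ≤ f i A := (hS _ (hf i)).2.1 A
          have : f i A = 0 := le_antisymm (hfi ▸ h1) h2
          simpa using this
        rw [hfz, smul_zero]
    set I : Finset (Fin m) := Finset.univ.filter (fun i => t i ≠ 0) with hI
    have hsumI : ∑ i ∈ I, t i = h k Finset.univ := by
      rw [hI, Finset.sum_filter_ne_zero, hsum_t]
    have hcm := Finset.centerMass_mem_convexHull (R := ℝ) (s := U) I (w := t)
      (fun i _ => htnn i) (by rw [hsumI]; exact hk)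
      (z := fun i => (t i)⁻¹ • (c i • f i)) ?_
    · have : I.centerMass t (fun i => (t i)⁻¹ • (c i • f i)) = (h k Finset.univ)⁻¹ • h k := by
        rw [Finset.centerMass, hsumI]
        congr 1
        have hterm : ∀ i ∈ I, t i • ((t i)⁻¹ • (c i • f i)) = c i • f i := by
          intro i hi
          have hti : t i ≠ 0 := (Finset.mem_filter.mp hi).2
          rw [smul_smul, mul_inv_cancel₀ hti, one_smul]
        rw [Finset.sum_congr rfl hterm]
        rw [Finset.sum_subset (Finset.filter_subset _ _)]
        · rw [heq]
        · intro i _ hi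
          have : t i = 0 := by
            by_contra hne
            exact hi (Finset.mem_filter.mpr ⟨Finset.mem_univ i, hne⟩)
          exact hzero i this
      rwa [this] at hcm
    · intro i hi
      have hti : t i ≠ 0 := (Finset.mem_filter.mp hi).2
      have htpos : 0 < t i := lt_of_le_of_ne (htnn i) (Ne.symm hti)
      have hci : 0 < c i := by
        rcases lt_or_eq_of_le (hc i) with h | h
        · exact h
        · exfalso; apply hti; rw [ht]; simp [← h]
      have hcoef : 0 < (t i)⁻¹ * c i := mul_pos (inv_pos.mpr htpos) hci
      have heqz : (t i)⁻¹ • (c i • f i) = ((t i)⁻¹ * c i) • f i := smul_smul _ _ _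
      show (t i)⁻¹ • (c i • f i) ∈ U
      refine ⟨?_, ?_, ?_⟩
      · rw [heqz]; exact (hS _ (hf i)).smul_nonneg hcoef.le
      · have : ((t i)⁻¹ • (c i • f i)) Finset.univ = (t i)⁻¹ * (c i * f i Finset.univ) := by
          simp [mul_assoc]
        rw [this]
        show (t i)⁻¹ * t i = 1
        exact inv_mul_cancel₀ hti
      · exact ⟨(t i)⁻¹ * c i, f i, hcoef, hf i, heqz⟩
  -- shifted normalized sequence
  set p : ℕ → Finset Y → ℝ := fun k => (h (K0 + k) Finset.univ)⁻¹ • h (K0 + k) with hp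
  have hshift : Tendsto (fun k : ℕ => K0 + k) atTop atTop := by
    simpa [Nat.add_comm] using tendsto_add_atTop_nat K0
  have hppos : ∀ k, 0 < h (K0 + k) Finset.univ := fun k => hK0 _ (Nat.le_add_right _ _)
  have hpmem : ∀ k, p k ∈ convexHull ℝ U := fun k => hhull _ (hppos k)
  have hRne : R ≠ 0 := ne_of_gt hru
  have hsk' : Tendsto (fun k => h (K0 + k) Finset.univ) atTop (𝓝 R) := hsk.comp hshift
  have hptend : ∀ A, Tendsto (fun k => p k A) atTop (𝓝 (R⁻¹ * r A)) := by
    intro A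
    have h1 : Tendsto (fun k => (h (K0 + k) Finset.univ)⁻¹) atTop (𝓝 R⁻¹) :=
      hsk'.inv₀ hRne
    have h2 : Tendsto (fun k => h (K0 + k) A) atTop (𝓝 (r A)) := (hco A).comp hshift
    simpa [hp] using h1.mul h2
  -- U is nonempty
  have hUne : U.Nonempty := by
    rcases U.eq_empty_or_nonempty with hemp | hne
    · exfalso
      have := hpmem 0
      rw [hemp, convexHull_empty] at this
      exact this
    · exact hne
  -- Carathéodory with fixed length
  set N := Module.finrank ℝ (Finset Y → ℝ) + 1 with hN
  choose w z hw0 hw1 hz hpz using fun k => mem_convexHull_finN hUne (hpmem k)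
  -- compactness
  have hbox : IsCompact (Set.univ.pi fun _ : Finset Y => Set.Icc (0:ℝ) 1) :=
    isCompact_univ_pi fun _ => isCompact_Icc
  have hboxcl : IsClosed (Set.univ.pi fun _ : Finset Y => Set.Icc (0:ℝ) 1) :=
    isClosed_set_pi fun _ _ => isClosed_Icc
  have hUbox : U ⊆ Set.univ.pi fun _ : Finset Y => Set.Icc (0:ℝ) 1 := by
    rintro u ⟨hupoly, huuniv, -⟩ A -
    exact ⟨hupoly.2.1 A, by rw [← huuniv]; exact hupoly.2.2.1 A Finset.univ (Finset.subset_univ A)⟩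
  have hclU : IsCompact (closure U) :=
    hbox.of_isClosed_subset isClosed_closure (closure_minimal hUbox hboxcl)
  have hPR : IsCompact ((stdSimplex ℝ (Fin N)) ×ˢ (Set.univ.pi fun _ : Fin N => closure U)) :=
    (isCompact_stdSimplex ℝ _).prod (isCompact_univ_pi fun _ => hclU)
  have hmemPR : ∀ k, (w k, z k) ∈
      (stdSimplex ℝ (Fin N)) ×ˢ (Set.univ.pi fun _ : Fin N => closure U) :=
    fun k => ⟨⟨hw0 k, hw1 k⟩, fun j _ => subset_closure (hz k j)⟩
  obtain ⟨⟨wl, zl⟩, hlimmem, φ, hφ, hφtend⟩ := hPR.tendsto_subseq hmemPR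
  have hwtendfun : Tendsto (fun k => w (φ k)) atTop (𝓝 wl) :=
    (continuous_fst.tendsto (wl, zl)).comp hφtend
  have hztendfun : Tendsto (fun k => z (φ k)) atTop (𝓝 zl) :=
    (continuous_snd.tendsto (wl, zl)).comp hφtend
  have hwtend : ∀ j, Tendsto (fun k => w (φ k) j) atTop (𝓝 (wl j)) :=
    fun j => tendsto_pi_nhds.mp hwtendfun j
  have hztend : ∀ j A, Tendsto (fun k => z (φ k) j A) atTop (𝓝 (zl j A)) :=
    fun j A => tendsto_pi_nhds.mp (tendsto_pi_nhds.mp hztendfun j) A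
  -- limit equation
  have hlimeq : ∀ A, R⁻¹ * r A = ∑ j, wl j * zl j A := by
    intro A
    have h1 : Tendsto (fun k => p (φ k) A) atTop (𝓝 (R⁻¹ * r A)) :=
      (hptend A).comp hφ.tendsto_atTop
    have h2 : Tendsto (fun k => ∑ j, w (φ k) j * z (φ k) j A) atTop
        (𝓝 (∑ j, wl j * zl j A)) :=
      tendsto_finset_sum _ fun j _ => (hwtend j).mul (hztend j A)
    have h3 : ∀ k, p (φ k) A = ∑ j, w (φ k) j * z (φ k) j A := by
      intro k
      rw [hpz (φ k)]
      simp [Finset.sum_apply]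
    exact tendsto_nhds_unique (h1.congr fun k => h3 k) h2
  -- properties of the limit points
  have hzlcl : ∀ j, zl j ∈ closure U := fun j => hlimmem.2 j (Set.mem_univ j)
  have hzlprops : ∀ j, IsPolymatroid (zl j) ∧ zl j Finset.univ = 1 ∧ zl j ∈ closure T := by
    intro j
    obtain ⟨y, hymem, hytend⟩ := mem_closure_iff_seq_limit.mp (hzlcl j)
    have hyco : ∀ A, Tendsto (fun n => y n A) atTop (𝓝 (zl j A)) := tendsto_pi_nhds.mp hytend
    refine ⟨isPolymatroid_of_tendsto (fun n => (hymem n).1) hyco, ?_, ?_⟩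
    · exact tendsto_nhds_unique (hyco Finset.univ)
        (by simpa using tendsto_const_nhds.congr fun n => ((hymem n).2.1).symm)
    · exact closure_mono (fun u hu => hu.2.2) (hzlcl j)
  have hwl0 : ∀ j, 0 ≤ wl j := fun j => hlimmem.1.1 j
  have hwl1 : ∑ j, wl j = 1 := hlimmem.1.2
  -- decomposition of r
  have hrdecomp : ∀ A, r A = ∑ j, (R * wl j) * zl j A := by
    intro A
    have := hlimeq A
    have h2 : r A = R * (R⁻¹ * r A) := by field_simp
    rw [h2, this, Finset.mul_sum]
    exact Finset.sum_congr rfl fun j _ => by ring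
  -- extremality applied to each term
  have hterm : ∀ j A, (R * wl j) * zl j A = wl j * r A := by
    intro j
    have hgj : IsPolymatroid (fun A => (R * wl j) * zl j A) := by
      have := (hzlprops j).1.smul_nonneg (c := R * wl j) (mul_nonneg hru.le (hwl0 j))
      simpa [Pi.smul_def, smul_eq_mul] using this
    have hg'j : IsPolymatroid (fun A => ∑ i ∈ Finset.univ.erase j, (R * wl i) * zl i A) := by
      have hsum := isPolymatroid_sum (Finset.univ.erase j)
        (fun i => fun A => (R * wl i) * zl i A) (fun i _ => by
          have := (hzlprops i).1.smul_nonneg (c := R * wl i) (mul_nonneg hru.le (hwl0 i))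
          simpa [Pi.smul_def, smul_eq_mul] using this)
      have heqf : (∑ i ∈ Finset.univ.erase j, fun A => (R * wl i) * zl i A)
          = fun A => ∑ i ∈ Finset.univ.erase j, (R * wl i) * zl i A := by
        funext A; simp [Finset.sum_apply]
      rwa [heqf] at hsum
    have hsumj : ∀ A, (fun A => (R * wl j) * zl j A) A
        + (fun A => ∑ i ∈ Finset.univ.erase j, (R * wl i) * zl i A) A = r A := by
      intro A
      rw [hrdecomp A]
      exact Finset.add_sum_erase Finset.univ (f := fun i => (R * wl i) * zl i A) (Finset.mem_univ j)
    obtain ⟨a, ha0, ha⟩ := extreme_decomp hconn hru hgj hg'j hsumj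
    have hauniv := ha Finset.univ
    rw [(hzlprops j).2.1, mul_one, ← hR] at hauniv
    have haval : a = wl j := by
      have h2 : R * wl j = R * a := by rw [hauniv]; ring
      exact (mul_left_cancel₀ hRne h2).symm
    intro A
    rw [ha A, haval]
  -- find an index with positive weight
  have hjpos : ∃ j, 0 < wl j := by
    by_contra hcon
    push_neg at hcon
    have : ∑ j, wl j = 0 :=
      Finset.sum_eq_zero fun j _ => le_antisymm (hcon j) (hwl0 j)
    rw [hwl1] at this
    norm_num at this
  obtain ⟨j0, hj0⟩ := hjpos
  -- the limit point is 1/R times r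
  have hzlr : ∀ A, r A = R * zl j0 A := by
    intro A
    have := hterm j0 A
    have hj0ne : wl j0 ≠ 0 := ne_of_gt hj0
    field_simp at this
    nlinarith [this]
  -- extract the sequence from closure T
  obtain ⟨y, hymem, hytend⟩ := mem_closure_iff_seq_limit.mp (hzlprops j0).2.2
  have hyco : ∀ A, Tendsto (fun n => y n A) atTop (𝓝 (zl j0 A)) := tendsto_pi_nhds.mp hytend
  choose cy gy hcy hgy hy using hymem
  refine ⟨gy, fun n => R * cy n, hgy, fun n => mul_pos hru (hcy n), ?_⟩
  intro A
  have h1 : ∀ n, (R * cy n) * gy n A = R * y n A := by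
    intro n
    rw [hy n]
    simp [mul_assoc]
  have h2 : Tendsto (fun n => R * y n A) atTop (𝓝 (R * zl j0 A)) :=
    (hyco A).const_mul R
  rw [← hzlr A] at h2
  exact h2.congr fun n => (h1 n).symm

end Extract

/-- let `(X_1, Φ_1)` be a connected matroid that is even representable but
not almost odd representable, `(X_2, Φ_2)` a connected matroid that is odd representable
but not almost even representable (disjoint ground sets, modelled by a sum type), and
`Φ` their direct sum. For `0 < ε ≤ min(Φ_1(X_1), Φ_2(X_2))`, the ε-perturbation
`Φ^ε(A) = min(Φ(A), Φ(X) − ε)` is not cc-representable. -/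
theorem direct_sum_perturbation_not_cc_representable
    {X1 X2 : Type} [Fintype X1] [Fintype X2] [DecidableEq X1] [DecidableEq X2]
    (Φ1 : Finset X1 → ℝ) (Φ2 : Finset X2 → ℝ)
    (h1conn : IsConnectedMatroid Φ1) (h2conn : IsConnectedMatroid Φ2)
    (h1even : EvenRepresentable Φ1) (h1notodd : ¬ AlmostOddRepresentable Φ1)
    (h2odd : OddRepresentable Φ2) (h2noteven : ¬ AlmostEvenRepresentable Φ2)
    (Φ : Finset (X1 ⊕ X2) → ℝ)
    (hΦ : ∀ A : Finset (X1 ⊕ X2), Φ A = Φ1 A.toLeft + Φ2 A.toRight)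
    (ε : ℝ) (hε0 : 0 < ε) (hε1 : ε ≤ min (Φ1 Finset.univ) (Φ2 Finset.univ)) :
    ¬ CcRepresentable (fun A => min (Φ A) (Φ Finset.univ - ε)) := by
  classical
  intro hcc
  set Φε : Finset (X1 ⊕ X2) → ℝ := fun A => min (Φ A) (Φ Finset.univ - ε) with hΦε
  obtain ⟨⟨h1poly, h1int, h1card⟩, h1circ⟩ := h1conn
  obtain ⟨h10, h1nn, h1mono, h1sub⟩ := h1poly
  obtain ⟨⟨h2poly, h2int, h2card⟩, h2circ⟩ := h2conn
  obtain ⟨h20, h2nn, h2mono, h2sub⟩ := h2poly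
  set R1 := Φ1 Finset.univ with hR1
  set R2 := Φ2 Finset.univ with hR2
  have hεR1 : ε ≤ R1 := le_trans hε1 (min_le_left _ _)
  have hεR2 : ε ≤ R2 := le_trans hε1 (min_le_right _ _)
  have hR1pos : 0 < R1 := lt_of_lt_of_le hε0 hεR1
  have hR2pos : 0 < R2 := lt_of_lt_of_le hε0 hεR2
  set A1 : Finset (X1 ⊕ X2) := Finset.univ.map Function.Embedding.inl with hA1def
  set A2 : Finset (X1 ⊕ X2) := Finset.univ.map Function.Embedding.inr with hA2def
  have hΦuniv : Φ Finset.univ = R1 + R2 := by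
    rw [hΦ, toLeft_univ, toRight_univ]
  have hΦA1 : Φ A1 = R1 := by
    rw [hΦ, hA1def, toLeft_map_inl, toRight_map_inl, h20, add_zero]
  have hΦA2 : Φ A2 = R2 := by
    rw [hΦ, hA2def, toLeft_map_inr, toRight_map_inr, h10, zero_add]
  have hεA1 : Φε A1 = R1 := by
    rw [hΦε]
    simp only [hΦA1, hΦuniv]
    exact min_eq_left (by linarith)
  have hεA2 : Φε A2 = R2 := by
    rw [hΦε]
    simp only [hΦA2, hΦuniv]
    exact min_eq_left (by linarith)
  have hεuniv : Φε Finset.univ = R1 + R2 - ε := by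
    rw [hΦε]
    simp only [hΦuniv]
    exact min_eq_right (by linarith)
  have hresL : resL Φε = Φ1 := by
    funext A
    show min (Φ (A.map Function.Embedding.inl)) (Φ Finset.univ - ε) = Φ1 A
    rw [hΦ, toLeft_map_inl, toRight_map_inl, h20, add_zero, hΦuniv]
    exact min_eq_left (by
      have := h1mono A Finset.univ (Finset.subset_univ A)
      linarith)
  have hresR : resR Φε = Φ2 := by
    funext A
    show min (Φ (A.map Function.Embedding.inr)) (Φ Finset.univ - ε) = Φ2 A
    rw [hΦ, toLeft_map_inr, toRight_map_inr, h10, zero_add, hΦuniv]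
    exact min_eq_left (by
      have := h2mono A Finset.univ (Finset.subset_univ A)
      linarith)
  have hSoddX1 : ∀ g ∈ {g : Finset X1 → ℝ | OddRepresentable g}, IsPolymatroid g :=
    fun g hg => hg.isRepresentable.isPolymatroid
  have hSevenX2 : ∀ g ∈ {g : Finset X2 → ℝ | EvenRepresentable g}, IsPolymatroid g :=
    fun g hg => hg.isRepresentable.isPolymatroid
  -- sequence from the closure
  obtain ⟨h, hhmem, hhtend⟩ := mem_closure_iff_seq_limit.mp hcc
  have hco : ∀ A, Tendsto (fun k => h k A) atTop (𝓝 (Φε A)) := tendsto_pi_nhds.mp hhtend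
  choose m c f hc hf heq using hhmem
  -- parity split
  set e : ℕ → Finset (X1 ⊕ X2) → ℝ := fun k =>
    ∑ i : Fin (m k), if EvenRepresentable (f k i) then c k i • f k i else 0 with he
  set o : ℕ → Finset (X1 ⊕ X2) → ℝ := fun k =>
    ∑ i : Fin (m k), if EvenRepresentable (f k i) then 0 else c k i • f k i with ho
  have hsplit : ∀ k, e k + o k = h k := by
    intro k
    rw [he, ho, ← Finset.sum_add_distrib, heq k]
    refine Finset.sum_congr rfl fun i _ => ?_
    by_cases hE : EvenRepresentable (f k i) <;> simp [hE]
  have hSodd : ∀ g ∈ {g : Finset (X1 ⊕ X2) → ℝ | OddRepresentable g}, IsPolymatroid g :=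
    fun g hg => hg.isRepresentable.isPolymatroid
  have hSeven : ∀ g ∈ {g : Finset (X1 ⊕ X2) → ℝ | EvenRepresentable g}, IsPolymatroid g :=
    fun g hg => hg.isRepresentable.isPolymatroid
  have hemem : ∀ k, e k ∈ coneHull {g : Finset (X1 ⊕ X2) → ℝ | EvenRepresentable g} := by
    intro k
    refine ⟨m k, fun i => if EvenRepresentable (f k i) then c k i else 0,
      fun i => if EvenRepresentable (f k i) then f k i else 0, fun i => ?_, fun i => ?_, ?_⟩
    · dsimp only
      split_ifs
      · exact hc k i
      · exact le_rfl
    · dsimp only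
      by_cases hE : EvenRepresentable (f k i)
      · rw [if_pos hE]; exact hE
      · rw [if_neg hE]; exact evenRepresentable_zero _
    · rw [he]
      refine Finset.sum_congr rfl fun i _ => ?_
      by_cases hE : EvenRepresentable (f k i) <;> simp [hE]
  have homem : ∀ k, o k ∈ coneHull {g : Finset (X1 ⊕ X2) → ℝ | OddRepresentable g} := by
    intro k
    refine ⟨m k, fun i => if EvenRepresentable (f k i) then 0 else c k i,
      fun i => if EvenRepresentable (f k i) then 0 else f k i, fun i => ?_, fun i => ?_, ?_⟩
    · dsimp only
      split_ifs
      · exact le_rfl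
      · exact hc k i
    · dsimp only
      by_cases hE : EvenRepresentable (f k i)
      · rw [if_pos hE]; exact oddRepresentable_zero _
      · rw [if_neg hE]
        rcases (hf k i).even_or_odd with h' | h'
        · exact absurd h' hE
        · exact h'
    · rw [ho]
      refine Finset.sum_congr rfl fun i _ => ?_
      by_cases hE : EvenRepresentable (f k i) <;> simp [hE]
  have hepoly : ∀ k, IsPolymatroid (e k) := fun k =>
    coneHull_polymatroid
      (fun g hg => (EvenRepresentable.isRepresentable hg).isPolymatroid) (hemem k)
  have hopoly : ∀ k, IsPolymatroid (o k) := fun k =>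
    coneHull_polymatroid
      (fun g hg => (OddRepresentable.isRepresentable hg).isPolymatroid) (homem k)
  have hEO : ∀ k A, e k A + o k A = h k A := by
    intro k A
    have := congrFun (hsplit k) A
    simpa using this
  have hele : ∀ k A, e k A ≤ h k A := by
    intro k A
    have := hEO k A
    have h2' := (hopoly k).2.1 A
    linarith
  -- uniform bound and compact extraction
  have hM : ∀ A, ∃ MA : ℝ, ∀ k, h k A ≤ MA := by
    intro A
    obtain ⟨MA, hMA⟩ := (hco A).bddAbove_range
    exact ⟨MA, fun k => hMA (Set.mem_range_self k)⟩
  choose M hMle using hM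
  have hcomp : IsCompact (Set.univ.pi fun A : Finset (X1 ⊕ X2) => Set.Icc (0:ℝ) (M A)) :=
    isCompact_univ_pi fun _ => isCompact_Icc
  have hmembox : ∀ k, e k ∈ Set.univ.pi fun A : Finset (X1 ⊕ X2) => Set.Icc (0:ℝ) (M A) :=
    fun k A _ => ⟨(hepoly k).2.1 A, le_trans (hele k A) (hMle A k)⟩
  obtain ⟨eL, heLmem, φ, hφ, hφtend⟩ := hcomp.tendsto_subseq hmembox
  have heco : ∀ A, Tendsto (fun k => e (φ k) A) atTop (𝓝 (eL A)) := tendsto_pi_nhds.mp hφtend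
  set oL : Finset (X1 ⊕ X2) → ℝ := fun A => Φε A - eL A with hoL
  have hoco : ∀ A, Tendsto (fun k => o (φ k) A) atTop (𝓝 (oL A)) := by
    intro A
    have h1 : (fun k => o (φ k) A) = fun k => h (φ k) A - e (φ k) A := by
      funext k
      have := hEO (φ k) A
      linarith
    rw [h1, hoL]
    exact ((hco A).comp hφ.tendsto_atTop).sub (heco A)
  have heLpoly : IsPolymatroid eL := isPolymatroid_of_tendsto (fun k => hepoly (φ k)) heco
  have hoLpoly : IsPolymatroid oL := isPolymatroid_of_tendsto (fun k => hopoly (φ k)) hoco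
  have heLcl : eL ∈ closure (coneHull {g : Finset (X1 ⊕ X2) → ℝ | EvenRepresentable g}) :=
    mem_closure_of_tendsto hφtend (Filter.Eventually.of_forall fun k => hemem (φ k))
  have hoLcl : oL ∈ closure (coneHull {g : Finset (X1 ⊕ X2) → ℝ | OddRepresentable g}) :=
    mem_closure_of_tendsto (tendsto_pi_nhds.mpr hoco)
      (Filter.Eventually.of_forall fun k => homem (φ k))
  -- restriction machinery
  have hcontL : Continuous (resL : (Finset (X1 ⊕ X2) → ℝ) → (Finset X1 → ℝ)) :=
    continuous_pi fun A => continuous_apply _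
  have hcontR : Continuous (resR : (Finset (X1 ⊕ X2) → ℝ) → (Finset X2 → ℝ)) :=
    continuous_pi fun A => continuous_apply _
  have himgL : ∀ (S : Set (Finset (X1 ⊕ X2) → ℝ)) (S' : Set (Finset X1 → ℝ)),
      (∀ g ∈ S, resL g ∈ S') → resL '' coneHull S ⊆ coneHull S' := by
    rintro S S' hmap x ⟨y, ⟨mm, cc, ff, hcc, hff, rfl⟩, rfl⟩
    refine ⟨mm, cc, fun i => resL (ff i), hcc, fun i => hmap _ (hff i), ?_⟩
    funext A
    simp only [resL, Finset.sum_apply, Pi.smul_apply, smul_eq_mul]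
  have himgR : ∀ (S : Set (Finset (X1 ⊕ X2) → ℝ)) (S' : Set (Finset X2 → ℝ)),
      (∀ g ∈ S, resR g ∈ S') → resR '' coneHull S ⊆ coneHull S' := by
    rintro S S' hmap x ⟨y, ⟨mm, cc, ff, hcc, hff, rfl⟩, rfl⟩
    refine ⟨mm, cc, fun i => resR (ff i), hcc, fun i => hmap _ (hff i), ?_⟩
    funext A
    simp only [resR, Finset.sum_apply, Pi.smul_apply, smul_eq_mul]
  -- decompose Φ1 via extremality
  have hsum1 : ∀ A, resL oL A + resL eL A = Φ1 A := by
    intro A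
    have h1 : resL eL A + resL oL A = resL Φε A := by
      show eL _ + oL _ = Φε _
      rw [hoL]
      ring
    rw [hresL] at h1
    linarith
  obtain ⟨b, hb0, hb⟩ := extreme_decomp
    (⟨⟨⟨h10, h1nn, h1mono, h1sub⟩, h1int, h1card⟩, h1circ⟩) hR1pos
    hoLpoly.resL heLpoly.resL hsum1
  -- b must vanish
  have hbz : oL A1 = 0 := by
    rcases le_or_gt b 0 with hble | hbpos
    · have h1 : resL oL Finset.univ = b * R1 := hb Finset.univ
      have h2 : 0 ≤ resL oL Finset.univ := hoLpoly.resL.2.1 Finset.univ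
      have h3 : b * R1 ≤ 0 := mul_nonpos_of_nonpos_of_nonneg hble hR1pos.le
      have h4 : resL oL Finset.univ ≤ 0 := by rw [h1]; exact h3
      exact le_antisymm h4 h2
    · exfalso
      apply h1notodd
      have hres_mem : resL oL ∈ closure (coneHull {g : Finset X1 → ℝ | OddRepresentable g}) := by
        have h1 : resL oL ∈ resL '' closure
            (coneHull {g : Finset (X1 ⊕ X2) → ℝ | OddRepresentable g}) :=
          Set.mem_image_of_mem _ hoLcl
        have h2 := image_closure_subset_closure_image hcontL h1
        exact closure_mono (himgL _ _ fun g hg => hg.resL) h2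
      have hΦ1mem : Φ1 ∈ closure (coneHull {g : Finset X1 → ℝ | OddRepresentable g}) := by
        have hsm : b⁻¹ • resL oL = Φ1 := by
          funext A
          have := hb A
          simp only [Pi.smul_apply, smul_eq_mul, this]
          field_simp
        have h1 : b⁻¹ • resL oL ∈ (fun x => b⁻¹ • x) '' closure
            (coneHull {g : Finset X1 → ℝ | OddRepresentable g}) :=
          Set.mem_image_of_mem _ hres_mem
        have h2 := image_closure_subset_closure_image (continuous_const_smul b⁻¹) h1
        rw [hsm] at h2
        refine closure_mono ?_ h2
        rintro x ⟨y, hy, rfl⟩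
        exact smul_coneHull (inv_nonneg.mpr hbpos.le) hy
      obtain ⟨g, cg, hgS, hgpos, hgtend⟩ := extract_single
        (⟨⟨⟨h10, h1nn, h1mono, h1sub⟩, h1int, h1card⟩, h1circ⟩) hR1pos hSoddX1 hΦ1mem
      exact ⟨g, cg, hgS, hgpos, hgtend⟩
  -- symmetric argument on the even side
  have hsum2 : ∀ A, resR eL A + resR oL A = Φ2 A := by
    intro A
    have h1 : resR eL A + resR oL A = resR Φε A := by
      show eL _ + oL _ = Φε _
      rw [hoL]
      ring
    rw [hresR] at h1
    exact h1
  obtain ⟨a, ha0, ha⟩ := extreme_decomp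
    (⟨⟨⟨h20, h2nn, h2mono, h2sub⟩, h2int, h2card⟩, h2circ⟩) hR2pos
    heLpoly.resR hoLpoly.resR hsum2
  have haz : eL A2 = 0 := by
    rcases le_or_gt a 0 with hale | hapos
    · have h1 : resR eL Finset.univ = a * R2 := ha Finset.univ
      have h2 : 0 ≤ resR eL Finset.univ := heLpoly.resR.2.1 Finset.univ
      have h3 : a * R2 ≤ 0 := mul_nonpos_of_nonpos_of_nonneg hale hR2pos.le
      have h4 : resR eL Finset.univ ≤ 0 := by rw [h1]; exact h3
      exact le_antisymm h4 h2
    · exfalso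
      apply h2noteven
      have hres_mem : resR eL ∈ closure (coneHull {g : Finset X2 → ℝ | EvenRepresentable g}) := by
        have h1 : resR eL ∈ resR '' closure
            (coneHull {g : Finset (X1 ⊕ X2) → ℝ | EvenRepresentable g}) :=
          Set.mem_image_of_mem _ heLcl
        have h2 := image_closure_subset_closure_image hcontR h1
        exact closure_mono (himgR _ _ fun g hg => hg.resR) h2
      have hΦ2mem : Φ2 ∈ closure (coneHull {g : Finset X2 → ℝ | EvenRepresentable g}) := by
        have hsm : a⁻¹ • resR eL = Φ2 := by
          funext A
          have := ha A
          simp only [Pi.smul_apply, smul_eq_mul, this]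
          field_simp
        have h1 : a⁻¹ • resR eL ∈ (fun x => a⁻¹ • x) '' closure
            (coneHull {g : Finset X2 → ℝ | EvenRepresentable g}) :=
          Set.mem_image_of_mem _ hres_mem
        have h2 := image_closure_subset_closure_image (continuous_const_smul a⁻¹) h1
        rw [hsm] at h2
        refine closure_mono ?_ h2
        rintro x ⟨y, hy, rfl⟩
        exact smul_coneHull (inv_nonneg.mpr hapos.le) hy
      obtain ⟨g, cg, hgS, hgpos, hgtend⟩ := extract_single
        (⟨⟨⟨h20, h2nn, h2mono, h2sub⟩, h2int, h2card⟩, h2circ⟩) hR2pos hSevenX2 hΦ2mem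
      exact ⟨g, cg, hgS, hgpos, hgtend⟩
  -- final contradiction
  have hUnion : A1 ∪ A2 = Finset.univ := map_inl_union_map_inr
  have hInter : A1 ∩ A2 = ∅ := map_inl_inter_map_inr
  have hsub_e : eL Finset.univ ≤ eL A1 + eL A2 := by
    have := heLpoly.2.2.2 A1 A2
    rw [hUnion, hInter, heLpoly.1] at this
    linarith
  have hsub_o : oL Finset.univ ≤ oL A1 + oL A2 := by
    have := hoLpoly.2.2.2 A1 A2
    rw [hUnion, hInter, hoLpoly.1] at this
    linarith
  have hmono_e : eL A1 ≤ eL Finset.univ := heLpoly.2.2.1 _ _ (Finset.subset_univ _)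
  have hmono_o : oL A2 ≤ oL Finset.univ := hoLpoly.2.2.1 _ _ (Finset.subset_univ _)
  have hv1 : eL A1 + oL A1 = R1 := by rw [hoL]; simp [hεA1]
  have hv2 : eL A2 + oL A2 = R2 := by rw [hoL]; simp [hεA2]
  have hv3 : eL Finset.univ + oL Finset.univ = R1 + R2 - ε := by rw [hoL]; simp [hεuniv]
  linarith
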